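/- Let n ≥ 2, r = ⌊n/2⌋, and P' = {(i,j) ∈ ℤ×ℤ : 1 ≤ i < j ≤ n, i + j ≤ n}. Then |P'| = (1/2)( n(n−1)/2 − ⌊n/2⌋ ), and (−1)^{|P'|} = sgn(τ_n), i.e., |P'| is even when n is even or n ≡ 1 (mod 4), and odd when n ≡ 3 (mod 4). -/

import Mathlib

section AuxLemmas

open Equiv Equiv.Perm Finset

private lemma my_sign_eq_signAux {n : ℕ} (f : Equiv.Perm (Fin n)) :
    Equiv.Perm.sign f = Equiv.Perm.signAux f := by
  refine Equiv.Perm.swap_induction_on f ?_ ?_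
  · simp [Equiv.Perm.signAux_one]
  · intro f x y hxy ih
    rw [Equiv.Perm.sign_mul, Equiv.Perm.signAux_mul, ih,
      Equiv.Perm.sign_swap hxy, Equiv.Perm.signAux_swap hxy]

private lemma my_U_closed : ∀ k : ℕ, (∑ x ∈ Finset.range (2*k), x/2) = k*(k-1) ∧
    (∑ x ∈ Finset.range (2*k+1), x/2) = k*k := by
  intro k
  induction k with
  | zero => simp
  | succ k ih =>
    obtain ⟨h1, h2⟩ := ih
    have e1 : 2*(k+1) = (2*k+1)+1 := by ring
    have h3 : (∑ x ∈ Finset.range (2*(k+1)), x/2) = k*k + (2*k+1)/2 := by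
      rw [e1, Finset.sum_range_succ, h2]
    have h4 : (∑ x ∈ Finset.range (2*(k+1)+1), x/2) = (k*k + (2*k+1)/2) + (2*(k+1))/2 := by
      rw [Finset.sum_range_succ, h3]
    constructor
    · rw [h3]; have : (2*k+1)/2 = k := by omega
      rw [this]; simp; ring
    · rw [h4]; have e2 : (2*k+1)/2 = k := by omega
      have e3 : (2*(k+1))/2 = k+1 := by omega
      rw [e2, e3]; ring

private lemma my_T_rec (N : ℕ) : (∑ j ∈ Finset.range (N+2), (N+2 - 2*j)) =
    (∑ j ∈ Finset.range N, (N - 2*j)) + (N+2) := by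
  rw [Finset.sum_range_succ']
  have e1 : ∀ j, (N+2) - 2*(j+1) = N - 2*j := by intro j; omega
  simp only [e1, Nat.mul_zero, Nat.sub_zero]
  rw [Finset.sum_range_succ]
  have : N - 2*N = 0 := by omega
  rw [this]; ring

private lemma my_T_closed : ∀ k : ℕ, (∑ j ∈ Finset.range (2*k), (2*k - 2*j)) = k*(k+1) ∧
    (∑ j ∈ Finset.range (2*k+1), (2*k+1 - 2*j)) = (k+1)*(k+1) := by
  intro k
  induction k with
  | zero => simp
  | succ k ih =>
    obtain ⟨h1, h2⟩ := ih
    constructor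
    · have e1 : 2*(k+1) = 2*k+2 := by ring
      rw [e1, my_T_rec (2*k), h1]; ring
    · have e1 : 2*(k+1)+1 = (2*k+1)+2 := by ring
      rw [e1, my_T_rec (2*k+1), h2]; ring

private lemma my_card_P' (n : ℕ) (hn : 2 ≤ n)
    (P' : Finset (ℕ × ℕ))
    (hP' : P' = (Finset.Icc 1 n ×ˢ Finset.Icc 1 n).filter
      (fun p => p.1 < p.2 ∧ p.1 + p.2 ≤ n)) :
    P'.card = ∑ j ∈ Finset.range (n-2), ((n-2) - 2*j) := by
  have hfib : ∀ x ∈ P', x.1 ∈ Finset.Icc 1 n := by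
    intro x hx; rw [hP'] at hx
    simp only [Finset.mem_filter, Finset.mem_product] at hx
    exact hx.1.1
  rw [Finset.card_eq_sum_card_fiberwise hfib]
  have hfib2 : ∀ i ∈ Finset.Icc 1 n,
      (P'.filter fun x => x.1 = i) = {i} ×ˢ Finset.Ioc i (n - i) := by
    intro i hi
    ext ⟨a, b⟩
    simp only [hP', Finset.mem_filter, Finset.mem_product, Finset.mem_Icc, Finset.mem_Ioc,
      Finset.mem_singleton]
    constructor
    · rintro ⟨⟨⟨h1, h2⟩, h3⟩, rfl⟩; refine ⟨rfl, ?_, ?_⟩ <;> omega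
    · rintro ⟨rfl, h1, h2⟩
      simp only [Finset.mem_Icc] at hi
      refine ⟨⟨⟨⟨hi.1, hi.2⟩, ?_, ?_⟩, ?_, ?_⟩, rfl⟩ <;> omega
  rw [Finset.sum_congr rfl (fun i hi => by rw [hfib2 i hi, Finset.card_product,
    Finset.card_singleton, Nat.card_Ioc, one_mul])]
  rw [show Finset.Icc 1 n = Finset.Ico 1 (n+1) by ext x; simp,
    Finset.sum_Ico_eq_sum_range]
  have e : ∀ j ∈ Finset.range (n + 1 - 1), (n - (1+j)) - (1+j) = (n-2) - 2*j := by
    intro j _; omega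
  rw [Finset.sum_congr rfl e]
  have e2 : n + 1 - 1 = (n-2) + 1 + 1 := by omega
  rw [e2, Finset.sum_range_succ, Finset.sum_range_succ]
  have z1 : (n-2) - 2*((n-2)+1) = 0 := by omega
  have z2 : (n-2) - 2*(n-2) = 0 := by omega
  rw [z1, z2]; omega

private lemma my_card_inversions (n : ℕ)
    (τ : Equiv.Perm (Fin n))
    (hτodd : ∀ i : Fin n, i.val % 2 = 0 → (τ i).val = i.val / 2)
    (hτeven : ∀ i : Fin n, i.val % 2 = 1 → (τ i).val = n - (i.val + 1) / 2) :
    ((Equiv.Perm.finPairsLT n).filter (fun x => τ x.1 ≤ τ x.2)).card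
      = ∑ x ∈ Finset.range n, x / 2 := by
  have key : (Equiv.Perm.finPairsLT n).filter (fun x => τ x.1 ≤ τ x.2)
      = (Equiv.Perm.finPairsLT n).filter (fun x => x.2.val % 2 = 1) := by
    apply Finset.filter_congr
    intro x hx
    rw [Equiv.Perm.mem_finPairsLT, Fin.lt_def] at hx
    have hAn : x.1.val < n := x.1.2
    have hBn : x.2.val < n := x.2.2
    constructor
    · intro h
      rw [Fin.le_def] at h
      by_contra hB
      have hB0 : x.2.val % 2 = 0 := by omega
      have h2 := hτodd x.2 hB0
      rcases Nat.even_or_odd x.1.val with hA | hA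
      · have hA0 : x.1.val % 2 = 0 := Nat.even_iff.mp hA
        have h1 := hτodd x.1 hA0
        omega
      · have hA1 : x.1.val % 2 = 1 := Nat.odd_iff.mp hA
        have h1 := hτeven x.1 hA1
        omega
    · intro hB
      rw [Fin.le_def]
      have h2 := hτeven x.2 hB
      rcases Nat.even_or_odd x.1.val with hA | hA
      · have hA0 : x.1.val % 2 = 0 := Nat.even_iff.mp hA
        have h1 := hτodd x.1 hA0
        omega
      · have hA1 : x.1.val % 2 = 1 := Nat.odd_iff.mp hA
        have h1 := hτeven x.1 hA1
        omega
  rw [key]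
  set F := (Equiv.Perm.finPairsLT n).filter (fun x => x.2.val % 2 = 1) with hF
  have hfib : ∀ x ∈ F, x.1 ∈ (Finset.univ : Finset (Fin n)) := fun x _ => Finset.mem_univ _
  rw [Finset.card_eq_sum_card_fiberwise hfib]
  rw [← Fin.sum_univ_eq_sum_range (fun x => x / 2) n]
  apply Finset.sum_congr rfl
  intro a _
  have count : ∀ m : ℕ, ((Finset.range m).filter (fun b => b % 2 = 1)).card = m / 2 := by
    intro m
    induction m with
    | zero => simp
    | succ m ih =>
      rw [Finset.range_add_one, Finset.filter_insert]
      by_cases h : m % 2 = 1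
      · rw [if_pos h, Finset.card_insert_of_notMem (by simp), ih]; omega
      · rw [if_neg h, ih]; omega
  rw [← count a.val]
  refine Finset.card_bij' (fun x _ => x.2.val)
    (fun m hm => (⟨a, ⟨m, by
      simp only [Finset.mem_filter, Finset.mem_range] at hm
      exact hm.1.trans a.2⟩⟩ : Σ _ : Fin n, Fin n)) ?hi ?hj ?left ?right
  case hi =>
    intro x hxF
    simp only [hF, Finset.mem_filter, Equiv.Perm.mem_finPairsLT] at hxF
    simp only [Finset.mem_filter, Finset.mem_range]
    obtain ⟨⟨h1, h2⟩, h3⟩ := hxF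
    rw [Fin.lt_def] at h1
    exact ⟨by rw [← h3]; exact h1, h2⟩
  case hj =>
    intro m hm
    simp only [Finset.mem_filter, Finset.mem_range] at hm
    simp only [hF, Finset.mem_filter, Equiv.Perm.mem_finPairsLT]
    refine ⟨⟨?_, hm.2⟩, trivial⟩
    rw [Fin.lt_def]
    exact hm.1
  case left =>
    rintro ⟨x1, x2⟩ hxF
    simp only [hF, Finset.mem_filter] at hxF
    obtain ⟨-, h3⟩ := hxF
    subst h3
    simp
  case right =>
    intro m hm
    rfl

end AuxLemmas

/-- Let `n ≥ 2` and `P' = {(i,j) : 1 ≤ i < j ≤ n, i + j ≤ n}`.  Then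
`|P'| = (1/2)(n(n−1)/2 − ⌊n/2⌋)`, and `(−1)^{|P'|} = sgn(τ_n)` where `τ_n` is the
permutation sending `2t−1 ↦ t`, `2t ↦ n+1−t`; equivalently `|P'|` is even exactly
when `n` is even or `n ≡ 1 (mod 4)`. -/
theorem card_P'_and_sign (n : ℕ) (hn : 2 ≤ n)
    (P' : Finset (ℕ × ℕ))
    (hP' : P' = (Finset.Icc 1 n ×ˢ Finset.Icc 1 n).filter
      (fun p => p.1 < p.2 ∧ p.1 + p.2 ≤ n))
    (τ : Equiv.Perm (Fin n))
    (hτodd : ∀ i : Fin n, i.val % 2 = 0 → (τ i).val = i.val / 2)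
    (hτeven : ∀ i : Fin n, i.val % 2 = 1 → (τ i).val = n - (i.val + 1) / 2) :
    2 * P'.card = n * (n - 1) / 2 - n / 2 ∧
    ((-1 : ℤ) ^ P'.card = (Equiv.Perm.sign τ : ℤ)) ∧
    (Even P'.card ↔ (n % 2 = 0 ∨ n % 4 = 1)) := by
  set cI := ((Equiv.Perm.finPairsLT n).filter (fun x => τ x.1 ≤ τ x.2)).card with hcIdef
  have hsign : (Equiv.Perm.sign τ : ℤ) = (-1 : ℤ) ^ cI := by
    have h1 : Equiv.Perm.sign τ = (-1 : ℤˣ) ^ cI := by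
      rw [my_sign_eq_signAux, Equiv.Perm.signAux, Finset.prod_ite,
        Finset.prod_const, Finset.prod_const, one_pow, mul_one]
    rw [h1]
    push_cast
    ring
  have hPcard := my_card_P' n hn P' hP'
  have hIcard := my_card_inversions n τ hτodd hτeven
  rcases Nat.even_or_odd n with he | ho
  · -- n = 2k, k ≥ 1
    obtain ⟨k, hk⟩ := he
    have hk2 : n = 2 * k := by omega
    have hk1 : 1 ≤ k := by omega
    obtain ⟨m, rfl⟩ : ∃ m, k = m + 1 := ⟨k - 1, by omega⟩
    -- card P'
    have hcP : P'.card = m * (m + 1) := by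
      rw [hPcard, show n - 2 = 2 * m by omega]
      exact (my_T_closed m).1
    have hcI : cI = m * (m + 1) := by
      rw [hcIdef, hIcard, hk2]
      rw [(my_U_closed (m+1)).1]
      simp
      ring
    refine ⟨?_, ?_, ?_⟩
    · rw [hcP, hk2]
      have e1 : 2 * (m+1) * (2 * (m+1) - 1) = 2 * ((m+1) * (2*m+1)) := by
        have : 2 * (m+1) - 1 = 2*m+1 := by omega
        rw [this]; ring
      rw [e1, Nat.mul_div_cancel_left _ (by norm_num : 0 < 2),
        Nat.mul_div_cancel_left _ (by norm_num : 0 < 2)]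
      rw [show (m+1) * (2*m+1) = 2 * (m * (m+1)) + (m+1) by ring, Nat.add_sub_cancel]
    · rw [hsign, hcP, hcI]
    · have hEven : Even (m * (m + 1)) := Nat.even_mul_succ_self m
      rw [hcP]
      exact iff_of_true hEven (Or.inl (by omega))
  · -- n = 2k+1, k ≥ 1
    obtain ⟨k, hk⟩ := ho
    have hk1 : 1 ≤ k := by omega
    have hcP : P'.card = k * k := by
      rw [hPcard, show n - 2 = 2 * (k-1) + 1 by omega]
      rw [(my_T_closed (k-1)).2, show k - 1 + 1 = k by omega]
    have hcI : cI = k * k := by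
      rw [hcIdef, hIcard, show n = 2*k+1 by omega]
      exact (my_U_closed k).2
    refine ⟨?_, ?_, ?_⟩
    · rw [hcP, hk]
      have e1 : (2*k+1) * (2*k+1-1) = 2 * (k * (2*k+1)) := by
        have : 2*k+1-1 = 2*k := by omega
        rw [this]; ring
      rw [e1, Nat.mul_div_cancel_left _ (by norm_num : 0 < 2),
        show (2*k+1)/2 = k by omega]
      rw [show k * (2*k+1) = 2 * (k*k) + k by ring, Nat.add_sub_cancel]
    · rw [hsign, hcP, hcI]
    · rw [hcP, Nat.even_mul, or_self, Nat.even_iff]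
      omega
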